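/- Let 1 ≤ b ≤ k be integers and let X_1,…,X_k be independent real random variables, each exponentially distributed with mean 1. Let M_b = max over all subsets S ⊆ {1,…,k} with |S| = b of Σ_{i∈S} X_i (i.e., M_b is the sum of the b largest of the X_i). Then E[M_b] = b·(1 + Σ_{j=b+1}^{k} 1/j), where the sum Σ_{j=b+1}^{k} 1/j is taken to be 0 when b = k. In particular, the lower-trimmed Hill statistic T_{b,k} is unbiased for ξ under the exact Pareto model. -/

import Mathlib

open MeasureTheory ProbabilityTheory Finset Real
open Nat (factorial)
open scoped ENNReal NNReal

namespace TrimHill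

variable {k : ℕ}

noncomputable def Msum (j : ℕ) (hjk : j ≤ k) (x : Fin k → ℝ) : ℝ :=
  ((Finset.univ : Finset (Fin k)).powersetCard j).sup'
    (Finset.powersetCard_nonempty.mpr (by simpa using hjk)) (fun S => ∑ i ∈ S, x i)

lemma Msum_zero (h : 0 ≤ k) (x : Fin k → ℝ) : Msum 0 h x = 0 := by
  simp [Msum]

lemma le_Msum (j : ℕ) (hjk : j ≤ k) (x : Fin k → ℝ) {S : Finset (Fin k)}
    (hS : S.card = j) : ∑ i ∈ S, x i ≤ Msum j hjk x :=
  Finset.le_sup' (f := fun S => ∑ i ∈ S, x i) (Finset.mem_powersetCard_univ.mpr hS)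

lemma exists_Msum (j : ℕ) (hjk : j ≤ k) (x : Fin k → ℝ) :
    ∃ S : Finset (Fin k), S.card = j ∧ Msum j hjk x = ∑ i ∈ S, x i := by
  obtain ⟨S, hS, hval⟩ := Finset.exists_mem_eq_sup'
    (Finset.powersetCard_nonempty.mpr (by simpa using hjk) :
      ((Finset.univ : Finset (Fin k)).powersetCard j).Nonempty) (fun S => ∑ i ∈ S, x i)
  exact ⟨S, (Finset.mem_powersetCard_univ.mp hS), hval⟩

lemma gap_gt_iff (j : ℕ) (hjk : j + 1 ≤ k) (x : Fin k → ℝ) (t : ℝ) :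
    t < Msum (j+1) hjk x - Msum j (le_trans (Nat.le_succ j) hjk) x ↔
      ∃ S : Finset (Fin k), S.card = j + 1 ∧ ∀ i ∈ S, t < x i := by
  constructor
  · intro h
    by_contra hc
    push_neg at hc
    obtain ⟨S, hScard, hSval⟩ := exists_Msum (j+1) hjk x
    obtain ⟨i₀, hi₀S, hi₀⟩ := hc S hScard
    have h1 : ∑ i ∈ S.erase i₀, x i = (∑ i ∈ S, x i) - x i₀ :=
      (sub_eq_of_eq_add (Finset.sum_erase_add S x hi₀S).symm).symm
    have h2 : ∑ i ∈ S.erase i₀, x i ≤ Msum j (le_trans (Nat.le_succ j) hjk) x :=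
      le_Msum _ _ _ (by rw [Finset.card_erase_of_mem hi₀S, hScard]; rfl)
    rw [hSval] at h
    rw [h1] at h2
    linarith
  · rintro ⟨S, hScard, hSgt⟩
    obtain ⟨T, hTcard, hTval⟩ := exists_Msum j (le_trans (Nat.le_succ j) hjk) x
    obtain ⟨i₀, hi₀S, hi₀T⟩ : ∃ i₀ ∈ S, i₀ ∉ T := by
      by_contra hcon; push_neg at hcon
      have hsub : S ⊆ T := fun i hi => hcon i hi
      have := Finset.card_le_card hsub
      omega
    have hins : (insert i₀ T).card = j + 1 := by
      rw [Finset.card_insert_of_notMem hi₀T, hTcard]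
    have h2 : ∑ i ∈ insert i₀ T, x i ≤ Msum (j+1) hjk x := le_Msum _ _ _ hins
    rw [Finset.sum_insert hi₀T] at h2
    have := hSgt i₀ hi₀S
    rw [hTval]
    linarith

lemma Msum_nonneg_gap (j : ℕ) (hjk : j + 1 ≤ k) (x : Fin k → ℝ) (hx : ∀ i, 0 ≤ x i) :
    0 ≤ Msum (j+1) hjk x - Msum j (le_trans (Nat.le_succ j) hjk) x := by
  obtain ⟨T, hTcard, hTval⟩ := exists_Msum j (le_trans (Nat.le_succ j) hjk) x
  obtain ⟨i₀, _, hi₀T⟩ : ∃ i₀ ∈ (Finset.univ : Finset (Fin k)), i₀ ∉ T := by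
    by_contra hcon; push_neg at hcon
    have hsub : (Finset.univ : Finset (Fin k)) ⊆ T := fun i hi => hcon i hi
    have := Finset.card_le_card hsub
    rw [Finset.card_univ, Fintype.card_fin] at this
    omega
  have hins : (insert i₀ T).card = j + 1 := by
    rw [Finset.card_insert_of_notMem hi₀T, hTcard]
  have h2 : ∑ i ∈ insert i₀ T, x i ≤ Msum (j+1) hjk x := le_Msum _ _ _ hins
  rw [Finset.sum_insert hi₀T] at h2
  have := hx i₀
  rw [hTval]
  linarith

/-! ### The beta-type integral -/

lemma integrableJ (m n : ℕ) (hm : 1 ≤ m) :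
    IntegrableOn (fun t : ℝ => exp (-(m * t)) * (1 - exp (-t)) ^ n) (Set.Ioi 0) := by
  apply Integrable.mono (exp_neg_integrableOn_Ioi 0 one_pos)
  · apply Continuous.aestronglyMeasurable
    fun_prop
  · filter_upwards [ae_restrict_mem measurableSet_Ioi] with t (ht : 0 < t)
    have h1 : 0 < exp (-t) := exp_pos _
    have h2 : exp (-t) ≤ 1 := exp_le_one_iff.mpr (by linarith)
    have h3 : exp (-(m * t)) ≤ exp (-t) := by
      apply exp_le_exp.mpr
      have : (1 : ℝ) ≤ m := by exact_mod_cast hm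
      nlinarith
    have h4 : (0:ℝ) ≤ (1 - exp (-t)) ^ n := pow_nonneg (by linarith) n
    have h5 : (1 - exp (-t)) ^ n ≤ 1 := by
      apply pow_le_one₀ (by linarith) (by linarith)
    rw [norm_mul, norm_pow, norm_eq_abs, norm_eq_abs, norm_eq_abs,
      abs_of_pos (exp_pos _), abs_of_pos (exp_pos _), abs_of_nonneg (by linarith)]
    calc exp (-(m*t)) * (1 - exp (-t)) ^ n ≤ exp (-(m*t)) * 1 := by
          apply mul_le_mul_of_nonneg_left h5 (exp_pos _).le
      _ = exp (-(m*t)) := mul_one _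
      _ ≤ exp (-t) := h3
      _ ≤ exp (-1 * t) := by norm_num

lemma Jval (n m : ℕ) (hm : 1 ≤ m) :
    ∫ t in Set.Ioi (0:ℝ), exp (-(m * t)) * (1 - exp (-t)) ^ n
      = (factorial (m-1) : ℝ) * factorial n / factorial (m + n) := by
  induction n generalizing m with
  | zero =>
    simp only [pow_zero, mul_one]
    have hmpos : (0:ℝ) < m := by exact_mod_cast hm
    have hI : ∫ t in Set.Ioi (0:ℝ), exp (-(m * t)) = ((m:ℝ))⁻¹ := by
      have := integral_comp_mul_left_Ioi (fun x => exp (-x)) 0 hmpos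
      simp only [mul_zero, smul_eq_mul, integral_exp_neg_Ioi, neg_zero, exp_zero, mul_one] at this
      simpa using this
    rw [hI, Nat.factorial_zero, Nat.add_zero, ← Nat.mul_factorial_pred (by omega : m ≠ 0)]
    have hf : (0:ℝ) < factorial (m-1) := by exact_mod_cast Nat.factorial_pos _
    push_cast
    rw [mul_one]
    field_simp
  | succ n ih =>
    have key : ∀ t : ℝ, exp (-(m * t)) * (1 - exp (-t)) ^ (n+1)
        = exp (-(m * t)) * (1 - exp (-t)) ^ n
          - exp (-((m+1 : ℕ) * t)) * (1 - exp (-t)) ^ n := by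
      intro t
      have : exp (-((m+1 : ℕ) * t)) = exp (-(m * t)) * exp (-t) := by
        rw [← exp_add]; push_cast; ring_nf
      rw [pow_succ, this]; ring
    rw [MeasureTheory.setIntegral_congr_fun measurableSet_Ioi (fun t _ => key t),
      integral_sub (integrableJ m n hm) (integrableJ (m+1) n (by omega)),
      ih m hm, ih (m+1) (by omega)]
    obtain ⟨m, rfl⟩ := Nat.exists_eq_add_of_le hm
    have e1 : (1 + m) - 1 = m := by omega
    have e2 : (1 + m) + 1 - 1 = m + 1 := by omega
    rw [e1, e2]
    have e3 : 1 + m + (n+1) = (1 + m + n) + 1 := by omega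
    have e4 : 1 + m + 1 + n = (1 + m + n) + 1 := by omega
    rw [e3, e4, Nat.factorial_succ (1+m+n), Nat.factorial_succ n, Nat.factorial_succ m]
    have h1 : (0:ℝ) < factorial (1 + m + n) := by exact_mod_cast Nat.factorial_pos _
    have h2 : (0:ℝ) < (1 + m + n) + 1 := by positivity
    push_cast
    field_simp
    ring

/-! ### Exponential measure facts -/

lemma expMeasure_Iic (t : ℝ) :
    expMeasure 1 (Set.Iic t) = ENNReal.ofReal (if 0 ≤ t then 1 - rexp (-t) else 0) := by
  rw [expMeasure, gammaMeasure, withDensity_apply _ measurableSet_Iic]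
  have h := lintegral_exponentialPDF_eq_antiDeriv (r := 1) one_pos t
  simp only [one_mul] at h
  rw [← h]
  rfl

lemma expMeasure_Ioi {t : ℝ} (ht : 0 ≤ t) :
    expMeasure 1 (Set.Ioi t) = ENNReal.ofReal (rexp (-t)) := by
  have hprob : IsProbabilityMeasure (expMeasure 1) := isProbabilityMeasure_expMeasure one_pos
  have hcompl : Set.Ioi t = (Set.Iic t)ᶜ := by simp
  have h1 : (0:ℝ) ≤ 1 - rexp (-t) := by
    have := exp_le_one_iff.mpr (by linarith : -t ≤ 0)
    linarith
  rw [hcompl, measure_compl measurableSet_Iic (measure_ne_top _ _), measure_univ,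
    expMeasure_Iic, if_pos ht, ← ENNReal.ofReal_one, ← ENNReal.ofReal_sub _ h1]
  norm_num

lemma expMeasure_Iio_zero : expMeasure 1 (Set.Iio 0) = 0 := by
  rw [expMeasure, gammaMeasure, withDensity_apply _ measurableSet_Iio]
  exact lintegral_exponentialPDF_of_nonpos le_rfl

lemma integrable_id_expMeasure : Integrable id (expMeasure 1) := by
  rw [expMeasure, gammaMeasure]
  have hpdf : gammaPDF 1 1 = fun x => ENNReal.ofReal (gammaPDFReal 1 1 x) := rfl
  rw [hpdf, integrable_withDensity_iff (measurable_gammaPDFReal 1 1).ennreal_ofReal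
    (ae_of_all _ fun x => ENNReal.ofReal_lt_top)]
  have hfun : ∀ x : ℝ, id x * (ENNReal.ofReal (gammaPDFReal 1 1 x)).toReal
      = Set.indicator (Set.Ioi (0:ℝ)) (fun x => rexp (-x) * x ^ ((2:ℝ) - 1)) x := by
    intro x
    rw [ENNReal.toReal_ofReal (gammaPDFReal_nonneg one_pos one_pos x)]
    rw [gammaPDFReal]
    rcases lt_trichotomy x 0 with h | h | h
    · rw [if_neg (not_le.mpr h), Set.indicator_of_notMem (by simpa using h.le)]
      simp
    · subst h; simp
    · rw [if_pos h.le, Set.indicator_of_mem (by simpa using h)]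
      rw [show (2:ℝ) - 1 = 1 by norm_num, rpow_one,
        show (1:ℝ) - 1 = 0 by norm_num, Real.rpow_zero]
      simp only [id, Real.Gamma_one]
      rw [Real.rpow_one]
      ring
  have hInt : IntegrableOn (fun x : ℝ => rexp (-x) * x ^ ((2:ℝ) - 1)) (Set.Ioi 0) :=
    Real.GammaIntegral_convergent (by norm_num : (0:ℝ) < 2)
  have := hInt.integrable_indicator measurableSet_Ioi
  exact this.congr (ae_of_all _ fun x => (hfun x).symm)

/-! ### Probability part -/

section Prob

variable {Ω : Type*} [MeasurableSpace Ω] {μ : Measure Ω} [IsProbabilityMeasure μ]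
  {X : Fin k → Ω → ℝ}

/-- The exact-exceedance event. -/
def Eev (X : Fin k → Ω → ℝ) (t : ℝ) (A : Finset (Fin k)) : Set Ω :=
  ⋂ i, X i ⁻¹' (if i ∈ A then Set.Ioi t else Set.Iic t)

lemma mem_Eev_iff {t : ℝ} {A : Finset (Fin k)} {ω : Ω} :
    ω ∈ Eev X t A ↔ ∀ i, if i ∈ A then t < X i ω else X i ω ≤ t := by
  simp only [Eev, Set.mem_iInter, Set.mem_preimage]
  apply forall_congr'
  intro i
  by_cases hi : i ∈ A <;> simp [hi]

lemma meas_Eev (hmeas : ∀ i, Measurable (X i))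
    (hindep : iIndepFun X μ)
    (hdist : ∀ i, Measure.map (X i) μ = expMeasure 1)
    {t : ℝ} (ht : 0 ≤ t) (A : Finset (Fin k)) :
    μ (Eev X t A) = ENNReal.ofReal (rexp (-t)) ^ A.card
      * ENNReal.ofReal (1 - rexp (-t)) ^ (k - A.card) := by
  have hB : ∀ i : Fin k, MeasurableSet (if i ∈ A then Set.Ioi t else Set.Iic t) := by
    intro i; split
    · exact measurableSet_Ioi
    · exact measurableSet_Iic
  rw [Eev, hindep.meas_iInter (fun i => ⟨_, hB i, rfl⟩)]
  have hone : ∀ i : Fin k, μ (X i ⁻¹' (if i ∈ A then Set.Ioi t else Set.Iic t))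
      = if i ∈ A then ENNReal.ofReal (rexp (-t)) else ENNReal.ofReal (1 - rexp (-t)) := by
    intro i
    by_cases hi : i ∈ A <;> simp only [hi, if_true, if_false]
    · rw [← Measure.map_apply (hmeas i) measurableSet_Ioi, hdist i, expMeasure_Ioi ht]
    · rw [← Measure.map_apply (hmeas i) measurableSet_Iic, hdist i, expMeasure_Iic, if_pos ht]
  rw [Finset.prod_congr rfl (fun i _ => hone i), Finset.prod_ite, Finset.prod_const,
    Finset.prod_const]
  congr 1
  · congr 1
    simp [Finset.filter_mem_eq_inter]
  · congr 1
    rw [Finset.filter_not]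
    rw [Finset.card_sdiff_of_subset (Finset.filter_subset _ _)]
    congr 1
    · simp
    · simp [Finset.filter_mem_eq_inter]

lemma event_eq (t : ℝ) (j : ℕ) :
    {ω : Ω | ∃ S : Finset (Fin k), S.card = j ∧ ∀ i ∈ S, t < X i ω}
      = ⋃ A ∈ ((Finset.Icc j k).biUnion fun m =>
          Finset.powersetCard m (Finset.univ : Finset (Fin k))), Eev X t A := by
  ext ω
  simp only [Set.mem_setOf_eq, Set.mem_iUnion, Finset.mem_biUnion, Finset.mem_Icc,
    Finset.mem_powersetCard_univ]
  constructor
  · rintro ⟨S, hScard, hSgt⟩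
    classical
    refine ⟨Finset.univ.filter (fun i => t < X i ω), ⟨⟨_, ⟨?_, ?_⟩, rfl⟩, ?_⟩⟩
    · rw [← hScard]
      apply Finset.card_le_card
      intro i hi
      simp only [Finset.mem_filter, Finset.mem_univ, true_and]
      exact hSgt i hi
    · calc (Finset.univ.filter (fun i => t < X i ω)).card
          ≤ (Finset.univ : Finset (Fin k)).card := Finset.card_le_card (Finset.filter_subset _ _)
        _ = k := by simp
    · rw [mem_Eev_iff]
      intro i
      by_cases hi : t < X i ω
      · rw [if_pos (by simp [hi])]; exact hi
      · rw [if_neg (by simp [hi])]; exact not_lt.mp hi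
  · rintro ⟨A, ⟨m, ⟨hjm, _⟩, hAcard⟩, hωA⟩
    obtain ⟨S, hSA, hScard⟩ := Finset.exists_subset_card_eq (by omega : j ≤ A.card)
    refine ⟨S, hScard, fun i hi => ?_⟩
    have hiA := hSA hi
    have := mem_Eev_iff.mp hωA i
    rwa [if_pos hiA] at this

lemma meas_event (hmeas : ∀ i, Measurable (X i))
    (hindep : iIndepFun X μ)
    (hdist : ∀ i, Measure.map (X i) μ = expMeasure 1)
    {t : ℝ} (ht : 0 ≤ t) (j : ℕ) :
    μ {ω : Ω | ∃ S : Finset (Fin k), S.card = j ∧ ∀ i ∈ S, t < X i ω}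
      = ∑ m ∈ Finset.Icc j k, (k.choose m : ℝ≥0∞)
          * ENNReal.ofReal (rexp (-t)) ^ m * ENNReal.ofReal (1 - rexp (-t)) ^ (k - m) := by
  have hm : ∀ A ∈ ((Finset.Icc j k).biUnion fun m =>
      Finset.powersetCard m (Finset.univ : Finset (Fin k))), MeasurableSet (Eev X t A) := by
    intro A _
    exact MeasurableSet.iInter fun i => (hmeas i) (by split <;>
      first | exact measurableSet_Ioi | exact measurableSet_Iic)
  have hd : Set.PairwiseDisjoint ↑((Finset.Icc j k).biUnion fun m =>
      Finset.powersetCard m (Finset.univ : Finset (Fin k))) (Eev X t) := by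
    intro A _ B _ hAB
    rw [Function.onFun, Set.disjoint_left]
    intro ω hA hB
    apply hAB
    ext i
    have h1 := mem_Eev_iff.mp hA i
    have h2 := mem_Eev_iff.mp hB i
    by_cases hiA : i ∈ A <;> by_cases hiB : i ∈ B <;>
      simp only [hiA, hiB, if_true, if_false] at h1 h2 ⊢ <;>
      first | trivial | (exfalso; linarith) | (simp [hiA, hiB])
  have hdisj : Set.PairwiseDisjoint ↑(Finset.Icc j k)
      (fun m => Finset.powersetCard m (Finset.univ : Finset (Fin k))) := by
    intro m _ n _ hmn
    rw [Function.onFun, Finset.disjoint_left]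
    intro A hA hB
    rw [Finset.mem_powersetCard_univ] at hA hB
    omega
  rw [event_eq, measure_biUnion_finset hd hm, Finset.sum_biUnion hdisj]
  apply Finset.sum_congr rfl
  intro m hm
  rw [Finset.sum_congr rfl (fun A hA => by
    rw [meas_Eev hmeas hindep hdist ht A, Finset.mem_powersetCard_univ.mp hA])]
  rw [Finset.sum_const, Finset.card_powersetCard, Finset.card_univ, Fintype.card_fin,
    nsmul_eq_mul, mul_assoc]

lemma ae_nonneg (hmeas : ∀ i, Measurable (X i))
    (hdist : ∀ i, Measure.map (X i) μ = expMeasure 1) :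
    ∀ᵐ ω ∂μ, ∀ i, 0 ≤ X i ω := by
  rw [MeasureTheory.ae_all_iff]
  intro i
  rw [MeasureTheory.ae_iff]
  have : {ω | ¬ 0 ≤ X i ω} = X i ⁻¹' Set.Iio 0 := by
    ext ω; simp [not_le]
  rw [this, ← Measure.map_apply (hmeas i) measurableSet_Iio, hdist i, expMeasure_Iio_zero]

lemma integrable_X (hmeas : ∀ i, Measurable (X i))
    (hdist : ∀ i, Measure.map (X i) μ = expMeasure 1) (i : Fin k) :
    Integrable (X i) μ := by
  have h := integrable_id_expMeasure
  rw [← hdist i] at h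
  rw [integrable_map_measure aestronglyMeasurable_id (hmeas i).aemeasurable] at h
  simpa [Function.comp] using h

lemma measurable_Msum (hmeas : ∀ i, Measurable (X i)) (j : ℕ) (h : j ≤ k) :
    Measurable (fun ω => Msum j h (fun i => X i ω)) := by
  have hne : ((Finset.univ : Finset (Fin k)).powersetCard j).Nonempty :=
    Finset.powersetCard_nonempty.mpr (by simpa using h)
  have := Finset.measurable_sup' hne (f := fun S (ω : Ω) => ∑ i ∈ S, X i ω)
    (fun S _ => Finset.measurable_sum S (fun i _ => hmeas i))
  convert this using 1
  funext ω
  rw [Finset.sup'_apply]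
  rfl

lemma integrable_Msum (hmeas : ∀ i, Measurable (X i))
    (hdist : ∀ i, Measure.map (X i) μ = expMeasure 1) (j : ℕ) (h : j ≤ k) :
    Integrable (fun ω => Msum j h (fun i => X i ω)) μ := by
  have hg : Integrable (fun ω => ∑ i, |X i ω|) μ :=
    integrable_finset_sum _ (fun i _ => (integrable_X hmeas hdist i).abs)
  apply hg.mono (measurable_Msum hmeas j h).aestronglyMeasurable
  apply ae_of_all
  intro ω
  have hub : ∀ S ∈ (Finset.univ : Finset (Fin k)).powersetCard j,
      ∑ i ∈ S, X i ω ≤ ∑ i, |X i ω| := by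
    intro S _
    calc ∑ i ∈ S, X i ω ≤ ∑ i ∈ S, |X i ω| := Finset.sum_le_sum fun i _ => le_abs_self _
      _ ≤ ∑ i, |X i ω| := Finset.sum_le_sum_of_subset_of_nonneg (Finset.subset_univ S)
          (fun i _ _ => abs_nonneg _)
  have h2 : Msum j h (fun i => X i ω) ≤ ∑ i, |X i ω| := Finset.sup'_le _ _ hub
  have h3 : -(∑ i, |X i ω|) ≤ Msum j h (fun i => X i ω) := by
    obtain ⟨S, hScard, hSval⟩ := exists_Msum j h (fun i => X i ω)
    have ha : ∑ i ∈ S, -|X i ω| ≤ ∑ i ∈ S, X i ω :=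
      Finset.sum_le_sum fun i _ => neg_abs_le _
    have hb : ∑ i ∈ S, |X i ω| ≤ ∑ i, |X i ω| :=
      Finset.sum_le_sum_of_subset_of_nonneg (Finset.subset_univ S) (fun i _ _ => abs_nonneg _)
    rw [Finset.sum_neg_distrib] at ha
    rw [hSval]
    linarith
  rw [Real.norm_eq_abs, Real.norm_eq_abs,
    abs_of_nonneg (Finset.sum_nonneg fun i _ => abs_nonneg (X i ω))]
  exact abs_le.mpr ⟨h3, h2⟩

lemma choose_formula {m : ℕ} (h1 : 1 ≤ m) (h2 : m ≤ k) :
    (k.choose m : ℝ) * ((factorial (m-1) : ℝ) * factorial (k-m) / factorial k)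
      = 1/m := by
  have key : k.choose m * factorial m * factorial (k-m) = factorial k :=
    Nat.choose_mul_factorial_mul_factorial h2
  have hm : factorial m = m * factorial (m-1) := (Nat.mul_factorial_pred (by omega)).symm
  rw [hm] at key
  have keyR : (k.choose m : ℝ) * (m * factorial (m-1)) * factorial (k-m) = factorial k := by
    exact_mod_cast congrArg (Nat.cast : ℕ → ℝ) key
  have hk0 : (factorial k : ℝ) ≠ 0 := by
    exact_mod_cast (Nat.factorial_pos k).ne'
  have hm0 : (m : ℝ) ≠ 0 := by
    have : 0 < m := h1
    exact_mod_cast this.ne'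
  field_simp
  nlinarith [keyR]

lemma EYval (hmeas : ∀ i, Measurable (X i))
    (hindep : iIndepFun X μ)
    (hdist : ∀ i, Measure.map (X i) μ = expMeasure 1)
    (j : ℕ) (h1 : j + 1 ≤ k) :
    ∫ ω, (Msum (j+1) h1 (fun i => X i ω)
        - Msum j (le_trans (Nat.le_succ j) h1) (fun i => X i ω)) ∂μ
      = ∑ m ∈ Finset.Icc (j+1) k, (1:ℝ)/m := by
  set f : Ω → ℝ := fun ω => Msum (j+1) h1 (fun i => X i ω)
      - Msum j (le_trans (Nat.le_succ j) h1) (fun i => X i ω) with hf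
  have hint : Integrable f μ :=
    (integrable_Msum hmeas hdist (j+1) h1).sub
      (integrable_Msum hmeas hdist j (le_trans (Nat.le_succ j) h1))
  have hnn : 0 ≤ᵐ[μ] f := by
    filter_upwards [ae_nonneg hmeas hdist] with ω hω
    exact Msum_nonneg_gap j h1 _ hω
  rw [hint.integral_eq_integral_meas_lt hnn]
  have hcong : ∀ t ∈ Set.Ioi (0:ℝ), (μ {a | t < f a}).toReal
      = ∑ m ∈ Finset.Icc (j+1) k, (k.choose m : ℝ)
          * (rexp (-(m * t)) * (1 - rexp (-t)) ^ (k - m)) := by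
    intro t ht
    have ht' : (0:ℝ) ≤ t := (Set.mem_Ioi.mp ht).le
    have hexp1 : rexp (-t) ≤ 1 := exp_le_one_iff.mpr (by linarith)
    have hset : {a : Ω | t < f a}
        = {ω : Ω | ∃ S : Finset (Fin k), S.card = j + 1 ∧ ∀ i ∈ S, t < X i ω} := by
      ext ω
      exact gap_gt_iff j h1 (fun i => X i ω) t
    rw [hset, meas_event hmeas hindep hdist ht' (j+1), ENNReal.toReal_sum (fun m _ => by
      apply ENNReal.mul_ne_top
      · apply ENNReal.mul_ne_top
        · exact ENNReal.natCast_ne_top _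
        · exact ENNReal.pow_ne_top ENNReal.ofReal_ne_top
      · exact ENNReal.pow_ne_top ENNReal.ofReal_ne_top)]
    apply Finset.sum_congr rfl
    intro m _
    rw [ENNReal.toReal_mul, ENNReal.toReal_mul, ENNReal.toReal_pow, ENNReal.toReal_pow,
      ENNReal.toReal_natCast, ENNReal.toReal_ofReal (exp_nonneg _),
      ENNReal.toReal_ofReal (by linarith)]
    rw [show -((m:ℝ) * t) = (m:ℝ) * (-t) by ring, Real.exp_nat_mul]
    ring
  rw [MeasureTheory.setIntegral_congr_fun measurableSet_Ioi (fun t ht => (measureReal_def μ _).trans (hcong t ht))]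
  rw [MeasureTheory.integral_finset_sum _ (fun m hm => by
    rw [Finset.mem_Icc] at hm
    exact ((integrableJ m (k - m) (by omega)).const_mul _))]
  apply Finset.sum_congr rfl
  intro m hm
  rw [Finset.mem_Icc] at hm
  rw [MeasureTheory.integral_const_mul, Jval (k-m) m (by omega),
    show m + (k - m) = k by omega, choose_formula (by omega : 1 ≤ m) (by omega : m ≤ k)]

end Prob

lemma sum_identity (b k : ℕ) (hbk : b ≤ k) :
    ∑ i ∈ Finset.range b, ∑ m ∈ Finset.Icc (i+1) k, (1:ℝ)/m
      = b * (1 + ∑ m ∈ Finset.Icc (b+1) k, (1:ℝ)/m) := by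
  induction b with
  | zero => simp
  | succ n ih =>
    have hnk : n + 1 ≤ k := hbk
    have hn : n ≤ k := by omega
    rw [Finset.sum_range_succ, ih hn]
    have hsplit : Finset.Icc (n+1) k = insert (n+1) (Finset.Icc (n+2) k) := by
      ext x; simp only [Finset.mem_Icc, Finset.mem_insert]; omega
    rw [hsplit, Finset.sum_insert (by simp [Finset.mem_Icc])]
    have hne : ((n:ℝ)+1) ≠ 0 := by positivity
    push_cast
    field_simp
    ring

end TrimHill

open TrimHill

/-- For independent exponential random variables `X_1,…,X_k` with mean 1, the expectation of
the sum `M_b` of the `b` largest of them (the maximum over all `b`-element subsets `S` of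
`∑_{i∈S} X_i`) equals `b·(1 + ∑_{j=b+1}^{k} 1/j)`. In particular the lower-trimmed Hill
statistic `T_{b,k}` is unbiased under the exact Pareto model. -/
theorem expectation_sum_b_largest_exponentials {Ω : Type*} [MeasurableSpace Ω]
    (μ : Measure Ω) [IsProbabilityMeasure μ] (b k : ℕ) (hb : 1 ≤ b) (hbk : b ≤ k)
    (X : Fin k → Ω → ℝ) (hmeas : ∀ i, Measurable (X i))
    (hindep : iIndepFun X μ)
    (hdist : ∀ i, Measure.map (X i) μ = expMeasure 1) :
    ∫ ω, ((Finset.univ : Finset (Fin k)).powersetCard b).sup'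
        (Finset.powersetCard_nonempty.mpr (by simpa using hbk))
        (fun S => ∑ i ∈ S, X i ω) ∂μ
      = (b : ℝ) * (1 + ∑ j ∈ Finset.Icc (b + 1) k, (1 : ℝ) / (j : ℝ)) := by
  have key : ∀ j (hj : j ≤ b), ∫ ω, Msum j (hj.trans hbk) (fun i => X i ω) ∂μ
      = ∑ i ∈ Finset.range j, ∑ m ∈ Finset.Icc (i+1) k, (1:ℝ)/m := by
    intro j
    induction j with
    | zero =>
      intro hj
      simp only [Msum_zero, Finset.range_zero, Finset.sum_empty]
      exact integral_zero _ _
    | succ n ih =>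
      intro hj
      have hn : n ≤ b := by omega
      have hnk : n + 1 ≤ k := hj.trans hbk
      have hEY := EYval hmeas hindep hdist n hnk
      rw [integral_sub (integrable_Msum hmeas hdist (n+1) hnk)
        (integrable_Msum hmeas hdist n (le_trans (Nat.le_succ n) hnk))] at hEY
      rw [Finset.sum_range_succ, ← ih hn]
      have e1 : ∫ ω, Msum (n+1) (hj.trans hbk) (fun i => X i ω) ∂μ
          = ∫ ω, Msum (n+1) hnk (fun i => X i ω) ∂μ := rfl
      have e2 : ∫ ω, Msum n (hn.trans hbk) (fun i => X i ω) ∂μ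
          = ∫ ω, Msum n (le_trans (Nat.le_succ n) hnk) (fun i => X i ω) ∂μ := rfl
      linarith [hEY, e1, e2]
  have main := key b le_rfl
  have estart : ∫ ω, ((Finset.univ : Finset (Fin k)).powersetCard b).sup'
        (Finset.powersetCard_nonempty.mpr (by simpa using hbk))
        (fun S => ∑ i ∈ S, X i ω) ∂μ
      = ∫ ω, Msum b (le_rfl.trans hbk) (fun i => X i ω) ∂μ := rfl
  rw [estart, main, sum_identity b k hbk]
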